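/- Let P ∈ H_n be a rank-k orthogonal projection and H ∈ H_n a Hermitian matrix with tr(HP) = w_k(H). Then, with respect to ℂ^n = Ran(P) ⊕ Ker(P), H is block diagonal: H = H₁ ⊕ H₂ with H₁ ∈ H_k, H₂ ∈ H_{n−k}, and λ_k(H₁) ≥ λ₁(H₂). -/

import Mathlib

open Matrix

/-- `P` is an orthogonal projection of rank `k`. -/
def IsProjOfRank {m : Type*} [Fintype m] [DecidableEq m]
    (P : Matrix m m ℂ) (k : ℕ) : Prop :=
  P * P = P ∧ Pᴴ = P ∧ P.rank = k

/-- The `k`-numerical range `W_k(A) = { tr (A P) : P an orthogonal projection of rank k }`. -/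
def WK {m : Type*} [Fintype m] [DecidableEq m] (k : ℕ) (A : Matrix m m ℂ) : Set ℂ :=
  {z | ∃ P : Matrix m m ℂ, IsProjOfRank P k ∧ z = (A * P).trace}

/-- The `k`-numerical radius `w_k(A) = max { |tr (A P)| : P a rank-k orthogonal projection }`. -/
noncomputable def wk {m : Type*} [Fintype m] [DecidableEq m] (k : ℕ) (A : Matrix m m ℂ) : ℝ :=
  sSup {r : ℝ | ∃ P : Matrix m m ℂ, IsProjOfRank P k ∧ r = ‖(A * P).trace‖}

/-- `A` and `B` are parallel with respect to the `k`-numerical radius. -/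
noncomputable def ParallelWk {m : Type*} [Fintype m] [DecidableEq m]
    (k : ℕ) (A B : Matrix m m ℂ) : Prop :=
  ∃ μ : ℂ, ‖μ‖ = 1 ∧ wk k (A + μ • B) = wk k A + wk k B

/-- Sum of the `k` largest eigenvalues of a Hermitian matrix (`0` if not Hermitian). -/
noncomputable def sumKLargest {m : Type*} [Fintype m] [DecidableEq m]
    (k : ℕ) (A : Matrix m m ℂ) : ℝ :=
  if h : A.IsHermitian then
    sSup {r : ℝ | ∃ s : Finset m, s.card = k ∧ r = ∑ i ∈ s, h.eigenvalues i}
  else 0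

/-- Sum of the `k` smallest eigenvalues of a Hermitian matrix (`0` if not Hermitian). -/
noncomputable def sumKSmallest {m : Type*} [Fintype m] [DecidableEq m]
    (k : ℕ) (A : Matrix m m ℂ) : ℝ :=
  if h : A.IsHermitian then
    sInf {r : ℝ | ∃ s : Finset m, s.card = k ∧ r = ∑ i ∈ s, h.eigenvalues i}
  else 0

section Helpers

variable {n : ℕ}

lemma myMul_vecMulVec (M : Matrix (Fin n) (Fin n) ℂ) (a b : Fin n → ℂ) :
    M * vecMulVec a b = vecMulVec (M *ᵥ a) b := by
  ext i j
  simp [mul_apply, vecMulVec_apply, mulVec, dotProduct, Finset.sum_mul, mul_assoc]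

lemma myVecMulVec_mul (a b : Fin n → ℂ) (M : Matrix (Fin n) (Fin n) ℂ) :
    vecMulVec a b * M = vecMulVec a (b ᵥ* M) := by
  ext i j
  simp [mul_apply, vecMulVec_apply, vecMul, dotProduct, Finset.mul_sum, mul_assoc]

lemma myVecMulVec_mul_vecMulVec (a b c d : Fin n → ℂ) :
    vecMulVec a b * vecMulVec c d = (b ⬝ᵥ c) • vecMulVec a d := by
  ext i j
  simp [mul_apply, vecMulVec_apply, dotProduct, Finset.sum_mul, Finset.mul_sum]
  ring_nf
  apply Finset.sum_congr rfl
  intros; ring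

lemma myTrace_vecMulVec (a b : Fin n → ℂ) : (vecMulVec a b).trace = a ⬝ᵥ b := by
  simp [trace, vecMulVec_apply, dotProduct, diag]

lemma myConjT_vecMulVec (a b : Fin n → ℂ) :
    (vecMulVec a b)ᴴ = vecMulVec (star b) (star a) := by
  ext i j
  simp [conjTranspose_apply, vecMulVec_apply, mul_comm]

lemma myVecMul_P (P : Matrix (Fin n) (Fin n) ℂ) (hPh : Pᴴ = P) (v : Fin n → ℂ) :
    star v ᵥ* P = star (P *ᵥ v) := by
  rw [star_mulVec, hPh]

lemma proj_entry_bound (Q : Matrix (Fin n) (Fin n) ℂ) (h1 : Q * Q = Q) (h2 : Qᴴ = Q)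
    (i j : Fin n) : ‖Q i j‖ ≤ 1 := by
  have hdiag : ∀ l : Fin n, Q l l = ((∑ p, Complex.normSq (Q l p) : ℝ) : ℂ) := by
    intro l
    have : Q l l = ∑ p, Q l p * Q p l := by
      conv_lhs => rw [← h1]
      simp [mul_apply]
    rw [this]
    push_cast
    refine Finset.sum_congr rfl fun p _ => ?_
    have h3 := congrFun (congrFun h2.symm p) l
    rw [conjTranspose_apply] at h3
    rw [h3, Complex.star_def, Complex.mul_conj]
  set r : ℝ := ∑ p, Complex.normSq (Q i p) with hr
  have hr0 : 0 ≤ r := Finset.sum_nonneg fun p _ => Complex.normSq_nonneg _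
  have hrsq : Complex.normSq (Q i i) = r ^ 2 := by
    rw [hdiag i, Complex.normSq_ofReal]; ring
  have hterm : Complex.normSq (Q i i) ≤ r :=
    Finset.single_le_sum (f := fun p => Complex.normSq (Q i p))
      (fun p _ => Complex.normSq_nonneg _) (Finset.mem_univ i)
  have hr1 : r ≤ 1 := by nlinarith [hrsq ▸ hterm]
  have hij : Complex.normSq (Q i j) ≤ r :=
    Finset.single_le_sum (f := fun p => Complex.normSq (Q i p))
      (fun p _ => Complex.normSq_nonneg _) (Finset.mem_univ j)
  have : (‖Q i j‖) ^ 2 ≤ 1 := by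
    rw [Complex.sq_norm]; linarith
  nlinarith [norm_nonneg (Q i j)]

lemma trace_eq_rank_of_idem {n : ℕ} (M : Matrix (Fin n) (Fin n) ℂ) (h : M * M = M) :
    M.trace = (M.rank : ℂ) := by
  have hmm : M.mulVecLin ∘ₗ M.mulVecLin = M.mulVecLin := by
    rw [← Matrix.mulVecLin_mul, h]
  have hproj : LinearMap.IsProj (LinearMap.range M.mulVecLin) M.mulVecLin := by
    refine ⟨fun x => LinearMap.mem_range_self _ x, ?_⟩
    rintro x ⟨y, rfl⟩
    exact congrFun (congrArg DFunLike.coe hmm) y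
  have ht := hproj.trace
  rw [LinearMap.trace_eq_matrix_trace ℂ (Pi.basisFun ℂ (Fin n)),
    LinearMap.toMatrix_eq_toMatrix'] at ht
  rw [show LinearMap.toMatrix' M.mulVecLin = M from LinearMap.toMatrix'_toLin' M] at ht
  rw [ht]; rfl

lemma wk_bdd (k : ℕ) (H : Matrix (Fin n) (Fin n) ℂ) :
    BddAbove {r : ℝ | ∃ P : Matrix (Fin n) (Fin n) ℂ,
      IsProjOfRank P k ∧ r = ‖(H * P).trace‖} := by
  refine ⟨∑ i, ∑ j, ‖H i j‖, ?_⟩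
  rintro r ⟨Q, ⟨h1, h2, _⟩, rfl⟩
  calc ‖(H * Q).trace‖ = ‖∑ i, ∑ j, H i j * Q j i‖ := by
        simp [trace, mul_apply, diag]
    _ ≤ ∑ i, ∑ j, ‖H i j * Q j i‖ := by
        refine (norm_sum_le _ _).trans ?_
        exact Finset.sum_le_sum fun i _ => norm_sum_le _ _
    _ ≤ ∑ i, ∑ j, ‖H i j‖ := by
        refine Finset.sum_le_sum fun i _ => Finset.sum_le_sum fun j _ => ?_
        rw [norm_mul]
        calc ‖H i j‖ * ‖Q j i‖
            ≤ ‖H i j‖ * 1 :=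
              mul_le_mul_of_nonneg_left (proj_entry_bound Q h1 h2 j i) (norm_nonneg _)
          _ = _ := mul_one _

lemma le_wk (k : ℕ) (H Q : Matrix (Fin n) (Fin n) ℂ) (hQ : IsProjOfRank Q k) :
    ((H * Q).trace).re ≤ wk k H := by
  refine (Complex.re_le_norm _).trans ?_
  exact le_csSup (wk_bdd k H) ⟨Q, hQ, rfl⟩

lemma smul_vecMulVec (c : ℂ) (a b : Fin n → ℂ) :
    vecMulVec (c • a) b = c • vecMulVec a b := by
  ext i j; simp [vecMulVec_apply, mul_assoc]

lemma vecMulVec_smul' (c : ℂ) (a b : Fin n → ℂ) :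
    vecMulVec a (c • b) = c • vecMulVec a b := by
  ext i j; simp [vecMulVec_apply]; ring

lemma keyLemma (k : ℕ) (H : Matrix (Fin n) (Fin n) ℂ)
    (P : Matrix (Fin n) (Fin n) ℂ) (hP : IsProjOfRank P k)
    (htr : (H * P).trace = (wk k H : ℂ))
    (x u : Fin n → ℂ) (hx : P *ᵥ x = x) (hxn : star x ⬝ᵥ x = 1)
    (hun : star u ⬝ᵥ u = 1) (hPu : P *ᵥ u = (star x ⬝ᵥ u) • x) :
    (star u ⬝ᵥ H *ᵥ u).re ≤ (star x ⬝ᵥ H *ᵥ x).re := by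
  obtain ⟨hP1, hP2, hP3⟩ := hP
  set α : ℂ := star x ⬝ᵥ u with hα
  set A := vecMulVec x (star x) with hA
  set U := vecMulVec u (star u) with hU
  set Q := P - A + U with hQ
  have hxP : star x ᵥ* P = star x := by rw [myVecMul_P P hP2, hx]
  have huP : star u ᵥ* P = star α • star x := by
    rw [myVecMul_P P hP2, hPu, star_smul]
  have hux : star u ⬝ᵥ x = star α := by
    conv_lhs => rw [← hx]
    rw [dotProduct_mulVec, huP, smul_dotProduct, hxn, smul_eq_mul, mul_one]
  have hPA : P * A = A := by rw [hA, myMul_vecMulVec, hx]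
  have hAP : A * P = A := by rw [hA, myVecMulVec_mul, hxP]
  have hPU : P * U = α • vecMulVec x (star u) := by
    rw [hU, myMul_vecMulVec, hPu, smul_vecMulVec]
  have hUP : U * P = star α • vecMulVec u (star x) := by
    rw [hU, myVecMulVec_mul, huP, vecMulVec_smul']
  have hAA : A * A = A := by
    rw [hA, myVecMulVec_mul_vecMulVec, hxn, one_smul]
  have hAU : A * U = α • vecMulVec x (star u) := by
    rw [hA, hU, myVecMulVec_mul_vecMulVec, ← hα]
  have hUA : U * A = star α • vecMulVec u (star x) := by
    rw [hA, hU, myVecMulVec_mul_vecMulVec, hux]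
  have hUU : U * U = U := by
    rw [hU, myVecMulVec_mul_vecMulVec, hun, one_smul]
  have hQQ : Q * Q = Q := by
    rw [hQ]
    simp only [sub_mul, mul_sub, add_mul, mul_add, hP1, hPA, hAP, hPU, hUP, hAA, hAU, hUA, hUU]
    abel
  have hQH : Qᴴ = Q := by
    rw [hQ, hA, hU]
    simp only [conjTranspose_add, conjTranspose_sub, hP2, myConjT_vecMulVec, star_star]
  have htrQ : Q.trace = P.trace := by
    rw [hQ, trace_add, trace_sub, hA, hU, myTrace_vecMulVec, myTrace_vecMulVec,
      dotProduct_comm, hxn, dotProduct_comm, hun]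
    ring
  have hrank : Q.rank = k := by
    have h1 := trace_eq_rank_of_idem Q hQQ
    have h2 := trace_eq_rank_of_idem P hP1
    rw [h1, h2, hP3] at htrQ
    exact_mod_cast htrQ
  have hQproj : IsProjOfRank Q k := ⟨hQQ, hQH, hrank⟩
  have htrHQ : (H * Q).trace
      = (H * P).trace - (star x ⬝ᵥ H *ᵥ x) + (star u ⬝ᵥ H *ᵥ u) := by
    rw [hQ, mul_add, mul_sub, trace_add, trace_sub, hA, hU, myMul_vecMulVec,
      myMul_vecMulVec, myTrace_vecMulVec, myTrace_vecMulVec, dotProduct_comm,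
      dotProduct_comm (H *ᵥ u)]
  have hle := le_wk k H Q hQproj
  rw [htrHQ] at hle
  have hre : ((H * P).trace).re = wk k H := by rw [htr, Complex.ofReal_re]
  simp only [Complex.add_re, Complex.sub_re, hre] at hle
  linarith

lemma orthoClaim (k : ℕ) (H : Matrix (Fin n) (Fin n) ℂ) (hH : H.IsHermitian)
    (P : Matrix (Fin n) (Fin n) ℂ) (hP : IsProjOfRank P k)
    (htr : (H * P).trace = (wk k H : ℂ))
    (x y : Fin n → ℂ) (hx : P *ᵥ x = x) (hy : P *ᵥ y = 0)
    (hxn : star x ⬝ᵥ x = 1) (hyn : star y ⬝ᵥ y = 1) :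
    star x ⬝ᵥ H *ᵥ y = 0 := by
  obtain ⟨hP1, hP2, hP3⟩ := hP
  have hxP : star x ᵥ* P = star x := by rw [myVecMul_P P hP2, hx]
  have hyP : star y ᵥ* P = 0 := by rw [myVecMul_P P hP2, hy]; simp
  have hxy : star x ⬝ᵥ y = 0 := by
    rw [← hxP, ← dotProduct_mulVec, hy, dotProduct_zero]
  have hyx : star y ⬝ᵥ x = 0 := by
    conv_lhs => rw [← hx]
    rw [dotProduct_mulVec, hyP, zero_dotProduct]
  set c₀ : ℂ := star x ⬝ᵥ H *ᵥ y with hc₀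
  have hb₀ : star y ⬝ᵥ H *ᵥ x = star c₀ := by
    rw [dotProduct_mulVec, myVecMul_P H hH, star_dotProduct]
  by_contra hc
  set ac : ℂ := star x ⬝ᵥ H *ᵥ x with hac
  set dc : ℂ := star y ⬝ᵥ H *ᵥ y with hdc
  set a : ℝ := ac.re with ha
  set d : ℝ := dc.re with hd
  set m : ℝ := ‖c₀‖ with hm
  have hm0 : 0 < m := (norm_pos_iff).mpr hc
  have hmc : (m : ℂ) ≠ 0 := by exact_mod_cast hm0.ne'
  set μ : ℂ := star c₀ / (m : ℂ) with hμ
  have hsc : star c₀ * c₀ = ((m ^ 2 : ℝ) : ℂ) := by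
    rw [Complex.star_def, mul_comm, Complex.mul_conj, Complex.normSq_eq_norm_sq, hm]
  have hμc : μ * c₀ = (m : ℂ) := by
    have hsc' := hsc
    push_cast at hsc'
    rw [Complex.star_def] at hsc'
    rw [hμ, div_mul_eq_mul_div, div_eq_iff hmc, hsc]
    push_cast
    ring
  have hsμ : star μ = c₀ / (m : ℂ) := by
    rw [hμ, star_div₀, star_star]
    congr 1
    rw [Complex.star_def, Complex.conj_ofReal]
  have hμμ : star μ * μ = 1 := by
    have hsc' := hsc
    push_cast at hsc'
    rw [hsμ, hμ, div_mul_div_comm]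
    rw [Complex.star_def] at hsc'
    rw [div_eq_one_iff_eq (by simp [hmc] : (↑m * ↑m : ℂ) ≠ 0)]
    simp only [Complex.star_def]
    linear_combination hsc'
  -- main inequality for every positive ε
  have main : ∀ ε : ℝ, 0 < ε → 2 * m ≤ ε * (a - d) := by
    intro ε hε
    set s : ℝ := (Real.sqrt (1 + ε ^ 2))⁻¹ with hs
    have hsqpos : 0 < Real.sqrt (1 + ε ^ 2) := Real.sqrt_pos.mpr (by positivity)
    have hs0 : 0 < s := by positivity
    have hs2 : s ^ 2 * (1 + ε ^ 2) = 1 := by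
      rw [hs, inv_pow, Real.sq_sqrt (by positivity : (0:ℝ) ≤ 1 + ε ^ 2)]
      field_simp
    have hs2c : ((s : ℂ)) ^ 2 * (1 + (ε : ℂ) ^ 2) = 1 := by exact_mod_cast hs2
    set w : ℂ := (ε : ℂ) * μ with hw
    have hsw : star w = (ε : ℂ) * star μ := by
      rw [hw, star_mul']
      congr 1
      rw [Complex.star_def, Complex.conj_ofReal]
    have hww : star w * w = (ε : ℂ) ^ 2 := by
      rw [hsw, hw]
      calc (ε:ℂ) * star μ * ((ε:ℂ) * μ) = (ε:ℂ)^2 * (star μ * μ) := by ring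
        _ = (ε:ℂ)^2 := by rw [hμμ, mul_one]
    have hwc : w * c₀ = (ε : ℂ) * m := by rw [hw, mul_assoc, hμc]
    have hwsc : star w * star c₀ = (ε : ℂ) * m := by
      rw [← star_mul', hwc, star_mul']
      simp [Complex.star_def, Complex.conj_ofReal]
    set u : Fin n → ℂ := (s : ℂ) • (x + w • y) with hu
    have hsu : star u = (s : ℂ) • (star x + star w • star y) := by
      rw [hu, star_smul, star_add, star_smul]
      congr 1
      rw [Complex.star_def, Complex.conj_ofReal]
    have hudot : star u ⬝ᵥ u = 1 := by
      rw [hsu, hu]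
      simp only [smul_dotProduct, dotProduct_smul, add_dotProduct, dotProduct_add,
        hxn, hyn, hxy, hyx, smul_eq_mul]
      linear_combination hs2c + (s:ℂ)^2 * hww
    have hxu : star x ⬝ᵥ u = (s:ℂ) := by
      rw [hu]
      simp only [dotProduct_smul, dotProduct_add, hxn, hxy, smul_eq_mul]
      ring
    have hPu : P *ᵥ u = (star x ⬝ᵥ u) • x := by
      rw [hxu, hu, mulVec_smul, mulVec_add, mulVec_smul, hx, hy, smul_zero, add_zero]
    have hkey := keyLemma k H P ⟨hP1, hP2, hP3⟩ htr x u hx hxn hudot hPu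
    have hHu : star u ⬝ᵥ H *ᵥ u
        = ((s^2 : ℝ) : ℂ) * (ac + ((2*ε*m : ℝ) : ℂ) + ((ε^2 : ℝ) : ℂ) * dc) := by
      rw [hsu, hu, mulVec_smul, mulVec_add, mulVec_smul]
      simp only [smul_dotProduct, dotProduct_smul, add_dotProduct, dotProduct_add,
        smul_eq_mul, ← hac, ← hdc, ← hc₀, hb₀]
      push_cast
      linear_combination ((s:ℂ)^2) * dc * hww + ((s:ℂ)^2) * hwc + ((s:ℂ)^2) * hwsc
    have hure : (star u ⬝ᵥ H *ᵥ u).re = s^2 * (a + 2*ε*m + ε^2*d) := by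
      rw [hHu, Complex.re_ofReal_mul, Complex.add_re, Complex.add_re,
        Complex.ofReal_re, Complex.re_ofReal_mul]
    rw [hure, ← ha] at hkey
    have hs2pos : (0:ℝ) < s ^ 2 := by positivity
    have e0 : s ^ 2 * (a + 2*ε*m + ε^2*d) ≤ s ^ 2 * (a * (1 + ε ^ 2)) := by
      calc s ^ 2 * (a + 2*ε*m + ε^2*d) ≤ a := hkey
        _ = s ^ 2 * (a * (1 + ε ^ 2)) := by
            rw [show s ^ 2 * (a * (1 + ε ^ 2)) = a * (s ^ 2 * (1 + ε ^ 2)) from by ring, hs2,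
              mul_one]
    have e1 := le_of_mul_le_mul_left e0 hs2pos
    have e2 : ε * (2 * m) ≤ ε * (ε * (a - d)) := by nlinarith [e1]
    have e3 := le_of_mul_le_mul_left e2 hε
    linarith
  have h1 := main (m / (|a - d| + 1)) (by positivity)
  have h2 : m / (|a - d| + 1) * (a - d) ≤ m / (|a - d| + 1) * (|a - d| + 1) := by
    apply mul_le_mul_of_nonneg_left _ (by positivity)
    linarith [le_abs_self (a - d)]
  have h3 : m / (|a - d| + 1) * (|a - d| + 1) = m := by
    field_simp
  linarith

end Helpers

lemma dot_self_pos {n : ℕ} (v : Fin n → ℂ) (hv : v ≠ 0) :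
    ∃ c : ℝ, 0 < c ∧ star v ⬝ᵥ v = (c : ℂ) := by
  refine ⟨∑ i, Complex.normSq (v i), ?_, ?_⟩
  · obtain ⟨i, hi⟩ := Function.ne_iff.mp hv
    exact Finset.sum_pos' (fun j _ => Complex.normSq_nonneg _)
      ⟨i, Finset.mem_univ i, Complex.normSq_pos.mpr hi⟩
  · push_cast
    refine Finset.sum_congr rfl fun i _ => ?_
    rw [Pi.star_apply, Complex.star_def, Complex.normSq_eq_conj_mul_self]

/-- if a Hermitian `H` satisfies `tr(HP) = w_k(H)` for a rank-`k` orthogonal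
projection `P`, then `H` is block diagonal with respect to `ℂⁿ = Ran P ⊕ Ker P` (i.e. `H`
commutes with `P`), and the smallest eigenvalue of the compression to `Ran P` dominates the
largest eigenvalue of the compression to `Ker P` (expressed via Rayleigh quotients). -/
theorem stmt_8 (n k : ℕ) (hk : 1 ≤ k) (hkn : k < n)
    (H : Matrix (Fin n) (Fin n) ℂ) (hH : H.IsHermitian)
    (P : Matrix (Fin n) (Fin n) ℂ) (hP : IsProjOfRank P k)
    (htr : (H * P).trace = (wk k H : ℂ)) :
    P * H = H * P ∧
      ∀ x y : Fin n → ℂ, P.mulVec x = x → P.mulVec y = 0 →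
        star x ⬝ᵥ x = 1 → star y ⬝ᵥ y = 1 →
        (star y ⬝ᵥ H.mulVec y).re ≤ (star x ⬝ᵥ H.mulVec x).re := by
  obtain ⟨hP1, hP2, hP3⟩ := hP
  constructor
  · -- commutation
    have hscaled : ∀ v w : Fin n → ℂ, P *ᵥ v = v → P *ᵥ w = 0 →
        star v ⬝ᵥ H *ᵥ w = 0 := by
      intro v w hv hw
      by_cases hv0 : v = 0
      · subst hv0
        simp
      by_cases hw0 : w = 0
      · subst hw0
        simp
      obtain ⟨cv, hcv0, hcv⟩ := dot_self_pos v hv0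
      obtain ⟨cw, hcw0, hcw⟩ := dot_self_pos w hw0
      set x : Fin n → ℂ := (((Real.sqrt cv)⁻¹ : ℝ) : ℂ) • v with hxdef
      set y : Fin n → ℂ := (((Real.sqrt cw)⁻¹ : ℝ) : ℂ) • w with hydef
      have hsv : (0:ℝ) < Real.sqrt cv := Real.sqrt_pos.mpr hcv0
      have hsw : (0:ℝ) < Real.sqrt cw := Real.sqrt_pos.mpr hcw0
      have hx : P *ᵥ x = x := by rw [hxdef, mulVec_smul, hv]
      have hy : P *ᵥ y = 0 := by rw [hydef, mulVec_smul, hw, smul_zero]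
      have hxn : star x ⬝ᵥ x = 1 := by
        rw [hxdef, star_smul, smul_dotProduct, dotProduct_smul, hcv]
        rw [Complex.star_def, Complex.conj_ofReal, smul_eq_mul, smul_eq_mul]
        norm_cast
        rw [show (Real.sqrt cv)⁻¹ * ((Real.sqrt cv)⁻¹ * cv)
            = cv / (Real.sqrt cv ^ 2) from by ring,
          Real.sq_sqrt hcv0.le, div_self hcv0.ne']
      have hyn : star y ⬝ᵥ y = 1 := by
        rw [hydef, star_smul, smul_dotProduct, dotProduct_smul, hcw]
        rw [Complex.star_def, Complex.conj_ofReal, smul_eq_mul, smul_eq_mul]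
        norm_cast
        rw [show (Real.sqrt cw)⁻¹ * ((Real.sqrt cw)⁻¹ * cw)
            = cw / (Real.sqrt cw ^ 2) from by ring,
          Real.sq_sqrt hcw0.le, div_self hcw0.ne']
      have h0 := orthoClaim k H hH P ⟨hP1, hP2, hP3⟩ htr x y hx hy hxn hyn
      rw [hxdef, hydef, star_smul, smul_dotProduct, mulVec_smul, dotProduct_smul,
        Complex.star_def, Complex.conj_ofReal, smul_eq_mul, smul_eq_mul,
        mul_eq_zero, mul_eq_zero] at h0
      rcases h0 with h | h | h
      · simp only [inv_eq_zero, Complex.ofReal_eq_zero] at h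
        exact absurd h hsv.ne'
      · simp only [inv_eq_zero, Complex.ofReal_eq_zero] at h
        exact absurd h hsw.ne'
      · exact h
    have hzero : P * (H * (1 - P)) = 0 := by
      ext i j
      have h1 : P *ᵥ (P *ᵥ Pi.single i 1) = P *ᵥ Pi.single i 1 := by
        rw [mulVec_mulVec, hP1]
      have h2 : P *ᵥ ((1 - P) *ᵥ Pi.single j 1) = 0 := by
        rw [mulVec_mulVec, mul_sub, mul_one, hP1, sub_self, zero_mulVec]
      have h3 := hscaled _ _ h1 h2
      rw [star_mulVec, hP2, mulVec_mulVec, ← dotProduct_mulVec, mulVec_mulVec,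
        ← Matrix.mul_assoc] at h3
      have h4 : (P * H * (1 - P)) *ᵥ Pi.single j 1 = fun i' => (P * H * (1 - P)) i' j := by
        ext i'
        rw [mulVec_single]
        simp
      rw [h4] at h3
      have h5 : star (Pi.single i 1 : Fin n → ℂ) = Pi.single i 1 := by
        ext l
        by_cases hl : l = i
        · subst hl; simp
        · simp [Pi.single_eq_of_ne hl]
      rw [h5] at h3
      have h6 : (Pi.single i 1 : Fin n → ℂ) ⬝ᵥ (fun i' => (P * H * (1 - P)) i' j)
          = (P * H * (1 - P)) i j := by
        rw [single_dotProduct, one_mul]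
      rw [h6] at h3
      rw [← Matrix.mul_assoc] at *
      simp only [Matrix.zero_apply]
      exact h3
    have hzero' : (1 - P) * (H * P) = 0 := by
      have hcj := congrArg conjTranspose hzero
      rw [conjTranspose_mul, conjTranspose_mul, conjTranspose_sub, conjTranspose_one,
        hP2, hH, conjTranspose_zero] at hcj
      rw [← Matrix.mul_assoc]
      exact hcj
    have e1 : P * H = P * H * P := by
      have hh : P * H - P * H * P = P * (H * (1 - P)) := by noncomm_ring
      exact sub_eq_zero.mp (by rw [hh, hzero])
    have e2 : H * P = P * (H * P) := by
      have hh : H * P - P * (H * P) = (1 - P) * (H * P) := by noncomm_ring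
      exact sub_eq_zero.mp (by rw [hh, hzero'])
    rw [e1, e2, Matrix.mul_assoc]
  · -- Rayleigh inequality
    intro x y hx hy hxn hyn
    have hxy : star x ⬝ᵥ y = 0 := by
      rw [← hx, star_mulVec, hP2, ← dotProduct_mulVec, hy, dotProduct_zero]
    have := keyLemma k H P ⟨hP1, hP2, hP3⟩ htr x y hx hxn hyn
      (by rw [hy, hxy, zero_smul])
    exact this
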